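/- If every clause C_q of φ contains at least one literal (and is hence made true by at least one truth assignment), then all m = 1 + log₂ r + 2s rows of the constructed matrix A are pairwise distinct, so (A, k) is a valid instance of Distinct Vectors. -/

import Mathlib

/-!
The construction of the paper.  Rows and columns are 0-indexed here:
* `r ≥ 2` is a power of two, the number of variables of the CNF formula `φ`;
  variables are elements of `Fin r`; a literal is a variable plus a polarity.
* `s = 2 ^ ℓ - 1` (with `ℓ ≥ 1`) is the number of clauses; clause `q : Fin s`
  is the finite set `Clause q` of literals.
* `L = log₂ r` is the number of bundles; bundle `i` is a list `B i` of exactly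
  `r' = ⌈r / log₂ r⌉` variables (with repetitions allowed), and every variable
  occurs in exactly one bundle.
* For every bundle `i` there is a list of `ρ = 2 ^ r'` truth assignments
  `asg i p : Fin r → Bool` (`p : Fin ρ`, only the values on `B i`'s variables are
  relevant) containing every assignment of `B i`'s variables at least once.
* The matrix `A` has `n = ℓ + ρ * L` columns: the `ℓ` consistency columns
  `0, …, ℓ - 1`, followed, for each bundle `i`, by `B i`'s columns
  `ℓ + i * ρ, …, ℓ + (i + 1) * ρ - 1` (the `p`-th corresponding to assignment `p`).
* The matrix `A` has `m = 1 + L + 2 * s` rows: the all-zero row `0`, the bundle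
  indicator rows `1, …, L` (row `i + 1` is `1` exactly on bundle `i`'s columns),
  and, for each clause `q : Fin s`, the odd row `1 + L + 2 * q` (the `ℓ`-bit binary
  encoding of `q + 1` on the consistency columns and `sat_i(p, q)` on the `p`-th of
  bundle `i`'s columns) and the even row `1 + L + 2 * q + 1` (the encoding of `q + 1`
  on the consistency columns and `0` elsewhere).
* `k = ℓ + L`.  A solution is a set `K` of at most `k` columns such that the rows
  of `A` restricted to the columns in `K` are pairwise distinct.
-/

/-- A literal over variables `Fin r`: a variable together with a polarity. -/
structure DVLit (r : ℕ) where
  var : Fin r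
  pos : Bool
deriving DecidableEq

/-- All the data of the construction: the CNF formula `φ` (variables, clauses),
the bundles, and the lists of truth assignments of each bundle. -/
structure DVInstance where
  /-- number of variables -/
  r : ℕ
  hr : 2 ≤ r
  hrpow : ∃ t : ℕ, r = 2 ^ t
  ℓ : ℕ
  hℓ : 1 ≤ ℓ
  /-- number of clauses -/
  s : ℕ
  hs : s = 2 ^ ℓ - 1
  /-- the clauses of `φ` -/
  Clause : Fin s → Finset (DVLit r)
  /-- the bundles: lists of variables of length `r' = ⌈r / log₂ r⌉` -/
  B : Fin (Nat.log 2 r) → List (Fin r)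
  hBlen : ∀ i, (B i).length = (r + Nat.log 2 r - 1) / Nat.log 2 r
  /-- every variable occurs in exactly one bundle -/
  hBpart : ∀ v : Fin r, ∃! i, v ∈ B i
  /-- the list of `ρ = 2 ^ r'` truth assignments of each bundle -/
  asg : Fin (Nat.log 2 r) → Fin (2 ^ ((r + Nat.log 2 r - 1) / Nat.log 2 r)) →
    Fin r → Bool
  /-- every assignment of a bundle's variables occurs at least once in its list -/
  hasg : ∀ i, ∀ β : Fin r → Bool, ∃ p, ∀ v ∈ B i, asg i p v = β v

namespace DVInstance

variable (D : DVInstance)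

/-- `L = log₂ r`, the number of bundles. -/
def L : ℕ := Nat.log 2 D.r

/-- `r' = ⌈r / log₂ r⌉`, the size of each bundle. -/
def r' : ℕ := (D.r + D.L - 1) / D.L

/-- `ρ = 2 ^ r'`, the number of columns of each bundle. -/
def ρ : ℕ := 2 ^ D.r'

/-- the number `n = log₂(s + 1) + ρ * log₂ r` of columns of `A`. -/
def n : ℕ := D.ℓ + D.ρ * D.L

/-- the number `m = 1 + log₂ r + 2 * s` of rows of `A`. -/
def m : ℕ := 1 + D.L + 2 * D.s

/-- the budget `k = log₂(s + 1) + log₂ r`. -/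
def k : ℕ := D.ℓ + D.L

/-- `sat_i(p, q)`: whether the `p`-th assignment of bundle `i` makes clause `q` true,
i.e. whether some literal of clause `q` whose variable belongs to bundle `i` is set
to its polarity by the `p`-th assignment of bundle `i` (nat-indexed version;
`false` outside the index ranges). -/
def satN (i p q : ℕ) : Bool :=
  if h : i < D.L ∧ p < D.ρ ∧ q < D.s then
    decide (∃ lit ∈ D.Clause ⟨q, h.2.2⟩, lit.var ∈ D.B ⟨i, h.1⟩ ∧
      D.asg ⟨i, h.1⟩ ⟨p, h.2.1⟩ lit.var = lit.pos)
  else false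

/-- The constructed binary matrix `A` (rows and columns 0-indexed;
entries outside the `m × n` range are irrelevant). -/
def A (row col : ℕ) : Bool :=
  if row = 0 then
    -- the all-zero row
    false
  else if row ≤ D.L then
    -- bundle indicator rows: row `i + 1` is `1` exactly on bundle `i`'s columns
    decide (D.ℓ + (row - 1) * D.ρ ≤ col ∧ col < D.ℓ + row * D.ρ)
  else if col < D.ℓ then
    -- clause rows on the consistency columns: the binary encoding of the
    -- (1-indexed) clause number
    Nat.testBit ((row - D.L - 1) / 2 + 1) col
  else if (row - D.L - 1) % 2 = 0 then
    -- odd row of clause `q = (row - L - 1) / 2`: `sat_i(p, q)` on the `p`-th of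
    -- bundle `i`'s columns
    D.satN ((col - D.ℓ) / D.ρ) ((col - D.ℓ) % D.ρ) ((row - D.L - 1) / 2)
  else
    -- even row of clause `q`: zero outside the consistency columns
    false

/-- `K` is a solution for the instance `(A, k)`: a set of at most `k` columns of `A`
such that the rows of `A` restricted to the columns in `K` are pairwise distinct. -/
def Solution (K : Finset ℕ) : Prop :=
  (∀ c ∈ K, c < D.n) ∧ K.card ≤ D.k ∧
    ∀ i j, i < D.m → j < D.m → i ≠ j → ∃ c ∈ K, D.A i c ≠ D.A j c

end DVInstance


lemma exists_testBit_ne {L a b : ℕ} (ha : a < 2 ^ L) (hb : b < 2 ^ L) (hne : a ≠ b) :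
    ∃ c, c < L ∧ a.testBit c ≠ b.testBit c := by
  by_contra h
  push_neg at h
  apply hne
  apply Nat.eq_of_testBit_eq
  intro c
  by_cases hc : c < L
  · exact h c hc
  · rw [Nat.testBit_lt_two_pow (lt_of_lt_of_le ha (Nat.pow_le_pow_right (by norm_num) (le_of_not_gt hc))),
        Nat.testBit_lt_two_pow (lt_of_lt_of_le hb (Nat.pow_le_pow_right (by norm_num) (le_of_not_gt hc)))]

namespace DVInstance
variable (D : DVInstance)

lemma hρpos : 0 < D.ρ := Nat.pow_pos (by norm_num)

lemma A_zero (c : ℕ) : D.A 0 c = false := by simp [DVInstance.A]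

lemma A_bundle (t c : ℕ) (h1 : 1 ≤ t) (h2 : t ≤ D.L) :
    D.A t c = decide (D.ℓ + (t - 1) * D.ρ ≤ c ∧ c < D.ℓ + t * D.ρ) := by
  unfold DVInstance.A
  rw [if_neg (by omega), if_pos h2]

lemma A_clause_cons (t c : ℕ) (h : D.L < t) (hc : c < D.ℓ) :
    D.A t c = Nat.testBit ((t - D.L - 1) / 2 + 1) c := by
  unfold DVInstance.A
  rw [if_neg (by omega), if_neg (by omega), if_pos hc]

lemma A_odd (q c : ℕ) (hc : D.ℓ ≤ c) :
    D.A (1 + D.L + 2 * q) c = D.satN ((c - D.ℓ) / D.ρ) ((c - D.ℓ) % D.ρ) q := by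
  unfold DVInstance.A
  rw [if_neg (by omega), if_neg (by omega), if_neg (by omega), if_pos (by omega)]
  congr 1
  omega

lemma A_even (q c : ℕ) (hc : D.ℓ ≤ c) : D.A (1 + D.L + 2 * q + 1) c = false := by
  unfold DVInstance.A
  rw [if_neg (by omega), if_neg (by omega), if_neg (by omega), if_neg (by omega)]

end DVInstance

/-- If every clause of `φ` contains at least one literal (and hence
is made true by at least one truth assignment), then all `m = 1 + log₂ r + 2s` rows of
the constructed matrix `A` are pairwise distinct, so `(A, k)` is a valid instance of
Distinct Vectors. -/
theorem rows_pairwise_distinct (D : DVInstance)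
    (hne : ∀ q : Fin D.s, (D.Clause q).Nonempty) :
    ∀ i j, i < D.m → j < D.m → i ≠ j → ∃ c, c < D.n ∧ D.A i c ≠ D.A j c := by
  have hρ : 0 < D.ρ := D.hρpos
  have h2ℓ : 1 ≤ 2 ^ D.ℓ := Nat.one_le_two_pow
  have hsℓ : D.s = 2 ^ D.ℓ - 1 := D.hs
  -- it suffices to treat i < j
  suffices H : ∀ i j, i < D.m → j < D.m → i < j → ∃ c, c < D.n ∧ D.A i c ≠ D.A j c by
    intro i j hi hj hij
    rcases lt_or_gt_of_ne hij with h | h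
    · exact H i j hi hj h
    · obtain ⟨c, hc, hne'⟩ := H j i hj hi h
      exact ⟨c, hc, hne'.symm⟩
  intro i j hi hj hij
  by_cases hjL : j ≤ D.L
  · -- both i and j are among row 0 and the bundle rows; use column ℓ + (j-1)*ρ
    refine ⟨D.ℓ + (j - 1) * D.ρ, ?_, ?_⟩
    · have : (j - 1) * D.ρ < D.L * D.ρ := (Nat.mul_lt_mul_right hρ).mpr (by omega)
      have : D.ℓ + (j - 1) * D.ρ < D.ℓ + D.ρ * D.L := by rw [Nat.mul_comm D.ρ D.L]; omega
      simpa [DVInstance.n] using this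
    · have hAj : D.A j (D.ℓ + (j - 1) * D.ρ) = true := by
        rw [D.A_bundle j _ (by omega) hjL]
        have : (j - 1) * D.ρ < j * D.ρ := (Nat.mul_lt_mul_right hρ).mpr (by omega)
        simp only [decide_eq_true_eq]
        omega
      have hAi : D.A i (D.ℓ + (j - 1) * D.ρ) = false := by
        rcases Nat.eq_zero_or_pos i with h0 | h0
        · rw [h0]; exact D.A_zero _
        · rw [D.A_bundle i _ h0 (by omega)]
          simp only [decide_eq_false_iff_not, not_and, not_lt]
          intro hle
          have : i * D.ρ ≤ (j - 1) * D.ρ := Nat.mul_le_mul_right _ (by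
            by_contra hc
            push_neg at hc
            have : (j - 1) * D.ρ < i * D.ρ := (Nat.mul_lt_mul_right hρ).mpr hc
            omega)
          omega
      rw [hAi, hAj]; simp
  · push_neg at hjL
    have hqj : (j - D.L - 1) / 2 < D.s := by
      have : j < 1 + D.L + 2 * D.s := by simpa [DVInstance.m] using hj
      omega
    by_cases hiL : i ≤ D.L
    · -- i is row 0 or a bundle row; j is a clause row: use a consistency column
      obtain ⟨c, hcℓ, hbit⟩ := exists_testBit_ne (L := D.ℓ) (a := 0) (b := (j - D.L - 1) / 2 + 1)
        (Nat.pow_pos (by norm_num)) (by omega) (by omega)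
      refine ⟨c, by simp [DVInstance.n]; omega, ?_⟩
      have hAj : D.A j c = Nat.testBit ((j - D.L - 1) / 2 + 1) c := D.A_clause_cons j c hjL hcℓ
      have hAi : D.A i c = false := by
        rcases Nat.eq_zero_or_pos i with h0 | h0
        · rw [h0]; exact D.A_zero _
        · rw [D.A_bundle i c h0 hiL]
          simp only [decide_eq_false_iff_not, not_and, not_lt]
          omega
      rw [hAi, hAj]
      rwa [Nat.zero_testBit] at hbit
    · -- both clause rows
      push_neg at hiL
      have hqi : (i - D.L - 1) / 2 < D.s := by
        have : i < 1 + D.L + 2 * D.s := by simpa [DVInstance.m] using hi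
        omega
      by_cases hq : (i - D.L - 1) / 2 = (j - D.L - 1) / 2
      · -- same clause: i is the odd row, j the even row
        have hij' : i = 1 + D.L + 2 * ((i - D.L - 1) / 2) ∧
            j = 1 + D.L + 2 * ((i - D.L - 1) / 2) + 1 := by omega
        set q := (i - D.L - 1) / 2 with hqdef
        -- find a satisfying column for clause q
        obtain ⟨lit, hlit⟩ := hne ⟨q, hqi⟩
        obtain ⟨i0, hi0, -⟩ := D.hBpart lit.var
        obtain ⟨p, hp⟩ := D.hasg i0 (fun _ => lit.pos)
        have hi0L : (i0 : ℕ) < D.L := i0.isLt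
        have hpρ : (p : ℕ) < D.ρ := p.isLt
        refine ⟨D.ℓ + ((i0 : ℕ) * D.ρ + (p : ℕ)), ?_, ?_⟩
        · have h1 : (i0 : ℕ) * D.ρ + (p : ℕ) < ((i0 : ℕ) + 1) * D.ρ := by
            rw [Nat.succ_mul]; omega
          have h2 : ((i0 : ℕ) + 1) * D.ρ ≤ D.L * D.ρ := Nat.mul_le_mul_right _ (by omega)
          have : D.ℓ + ((i0 : ℕ) * D.ρ + (p : ℕ)) < D.ℓ + D.ρ * D.L := by
            rw [Nat.mul_comm D.ρ D.L]; omega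
          simpa [DVInstance.n] using this
        · have hcℓ : D.ℓ ≤ D.ℓ + ((i0 : ℕ) * D.ρ + (p : ℕ)) := Nat.le_add_right _ _
          have hAi : D.A i (D.ℓ + ((i0 : ℕ) * D.ρ + (p : ℕ))) = true := by
            rw [hij'.1, D.A_odd q _ hcℓ]
            have hsub : D.ℓ + ((i0 : ℕ) * D.ρ + (p : ℕ)) - D.ℓ = (i0 : ℕ) * D.ρ + (p : ℕ) := by
              omega
            rw [hsub, Nat.mul_comm (i0 : ℕ) D.ρ, Nat.mul_add_div hρ, Nat.mul_add_mod,
              Nat.div_eq_of_lt hpρ, Nat.mod_eq_of_lt hpρ, Nat.add_zero]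
            unfold DVInstance.satN
            rw [dif_pos ⟨hi0L, hpρ, hqi⟩]
            simp only [decide_eq_true_eq]
            exact ⟨lit, hlit, by simpa using hi0, by simpa using hp lit.var hi0⟩
          have hAj : D.A j (D.ℓ + ((i0 : ℕ) * D.ρ + (p : ℕ))) = false := by
            rw [hij'.2]; exact D.A_even q _ hcℓ
          rw [hAi, hAj]; simp
      · -- different clauses: consistency columns differ
        obtain ⟨c, hcℓ, hbit⟩ := exists_testBit_ne (L := D.ℓ) (a := (i - D.L - 1) / 2 + 1)
          (b := (j - D.L - 1) / 2 + 1) (by omega) (by omega) (by omega)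
        refine ⟨c, by simp [DVInstance.n]; omega, ?_⟩
        rw [D.A_clause_cons i c hiL hcℓ, D.A_clause_cons j c hjL hcℓ]
        exact hbit
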